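/- Let u > v be positive integers and suppose u = v^r for no integer r ≥ 2 (and u ≠ v). Then there is no strictly increasing sequence of positive integers {n_k} with lim_{k→∞} v^{n_k}/u^k = 1. -/

import Mathlib

/-- If `u > v` are positive integers with `u` not a power `v^r` (`r ≥ 2`), then there is
no strictly increasing sequence of positive integers `n_k` with `v^{n_k}/u^k → 1`. -/
theorem stmt13 (u v : ℕ) (hv : 0 < v) (huv : v < u)
    (hpow : ∀ r : ℕ, 2 ≤ r → u ≠ v ^ r) :
    ¬ ∃ n : ℕ → ℕ, StrictMono n ∧ (∀ k, 0 < n k) ∧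
      Filter.Tendsto (fun k : ℕ => (v : ℝ) ^ n k / (u : ℝ) ^ k) Filter.atTop
        (nhds 1) := by
  rintro ⟨n, hmono, hpos, hlim⟩
  have hu0 : (0:ℝ) < u := by exact_mod_cast hv.trans huv
  have hv0 : (0:ℝ) < v := by exact_mod_cast hv
  -- ratio of consecutive terms
  have hshift : Filter.Tendsto (fun k : ℕ => (v : ℝ) ^ n (k+1) / (u : ℝ) ^ (k+1))
      Filter.atTop (nhds 1) := by
    exact hlim.comp (Filter.tendsto_add_atTop_nat 1)
  have hdiv : Filter.Tendsto (fun k : ℕ =>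
      ((v : ℝ) ^ n (k+1) / (u : ℝ) ^ (k+1)) / ((v : ℝ) ^ n k / (u : ℝ) ^ k))
      Filter.atTop (nhds 1) := by
    have := hshift.div hlim one_ne_zero
    rw [div_one] at this; exact this
  have hratio : ∀ k : ℕ,
      ((v : ℝ) ^ n (k+1) / (u : ℝ) ^ (k+1)) / ((v : ℝ) ^ n k / (u : ℝ) ^ k)
        = (v : ℝ) ^ (n (k+1) - n k) / u := by
    intro k
    have hlt : n k < n (k+1) := hmono (Nat.lt_succ_self k)
    have hd : n (k+1) = n k + (n (k+1) - n k) := by omega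
    rw [hd, pow_add, pow_succ]
    field_simp
    ring
    rw [Nat.add_sub_cancel]
  have hlim2 : Filter.Tendsto (fun k : ℕ => (v : ℝ) ^ (n (k+1) - n k))
      Filter.atTop (nhds u) := by
    have h1 : Filter.Tendsto (fun k : ℕ => (v : ℝ) ^ (n (k+1) - n k) / u)
        Filter.atTop (nhds 1) := by
      simpa only [hratio] using hdiv
    have := h1.mul_const (u : ℝ)
    simp only [div_mul_cancel₀ _ (ne_of_gt hu0), one_mul] at this
    exact this
  have hev : ∀ᶠ k in Filter.atTop, dist ((v : ℝ) ^ (n (k+1) - n k)) u < 1/2 :=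
    hlim2.eventually (Metric.ball_mem_nhds _ (by norm_num))
  obtain ⟨k, hk⟩ := hev.exists
  set d := n (k+1) - n k with hdset
  have hd1 : 1 ≤ d := by
    have := hmono (by omega : k < k+1); omega
  have heq : v ^ d = u := by
    have h1 : |((v:ℝ)) ^ d - u| < 1/2 := by
      simpa [Real.dist_eq] using hk
    obtain ⟨ha, hb⟩ := abs_lt.mp h1
    have hlo : ((u:ℤ) : ℝ) - 1 < (((v ^ d : ℕ) : ℤ) : ℝ) := by push_cast; linarith
    have hhi : (((v ^ d : ℕ) : ℤ) : ℝ) < ((u:ℤ) : ℝ) + 1 := by push_cast; linarith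
    have hlo' : (u:ℤ) - 1 < ((v ^ d : ℕ) : ℤ) := by exact_mod_cast (by linarith : ((u:ℤ):ℝ) - 1 < (((v ^ d : ℕ) : ℤ) : ℝ))
    have hhi' : ((v ^ d : ℕ) : ℤ) < (u:ℤ) + 1 := by exact_mod_cast hhi
    have : ((v ^ d : ℕ) : ℤ) = (u : ℤ) := by omega
    exact_mod_cast this
  rcases Nat.lt_or_ge d 2 with hd2 | hd2
  · interval_cases d
    · simp at heq; omega
  · exact hpow d hd2 heq.symm
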